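/- Let P, Q be probability distributions on a finite set [d] and let F, G be distributions supported on supp(Q). If ‖F - P‖₁ ≤ η and supp(P) ⊆ supp(Q), then D(F‖Q) ≥ D(P‖Q) - (2·log₂(1/q_min)·η + (2√2/ln 2)·√η), where q_min is the minimal nonzero probability of Q. -/

import Mathlib

open MeasureTheory Filter Finset
open scoped ENNReal

/-- `p` is a probability distribution on `Fin d`. -/
def IsProbDist {d : ℕ} (p : Fin d → ℝ) : Prop :=
  (∀ i, 0 ≤ p i) ∧ ∑ i, p i = 1

/-- Base-2 Kullback–Leibler divergence (real-valued version, meaningful when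
`supp p ⊆ supp q`), with the convention `0 · log(0/q) = 0`. -/
noncomputable def klDivReal {d : ℕ} (p q : Fin d → ℝ) : ℝ :=
  ∑ i, if p i = 0 then 0 else p i * Real.logb 2 (p i / q i)

/-- Base-2 Kullback–Leibler divergence, `+∞` when `supp p ⊄ supp q`. -/
noncomputable def klDiv {d : ℕ} (p q : Fin d → ℝ) : EReal :=
  if ∀ i, q i = 0 → p i = 0 then ((klDivReal p q : ℝ) : EReal) else ⊤

/-- Minimal nonzero entry of `p` (junk value `1` if there is none). -/
noncomputable def minPos {d : ℕ} (p : Fin d → ℝ) : ℝ :=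
  if h : (Finset.univ.filter fun i => 0 < p i).Nonempty
  then (Finset.univ.filter fun i => 0 < p i).inf' h p else 1

/-- The continuity modulus `g(p, ε) = 2 log₂(1/p_min) ε + (2√2/ln 2) √ε`. -/
noncomputable def gCont {d : ℕ} (p : Fin d → ℝ) (ε : ℝ) : ℝ :=
  2 * Real.logb 2 (1 / minPos p) * ε + (2 * Real.sqrt 2 / Real.log 2) * Real.sqrt ε

/-- The discrete measure on `Fin d` with mass `p i` at `i`. -/
noncomputable def discMeasure {d : ℕ} (p : Fin d → ℝ) : Measure (Fin d) :=
  Measure.count.withDensity fun i => ENNReal.ofReal (p i)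

instance discMeasure.isFiniteMeasure {d : ℕ} (p : Fin d → ℝ) :
    IsFiniteMeasure (discMeasure p) := by
  constructor
  rw [discMeasure, withDensity_apply _ MeasurableSet.univ,
    MeasureTheory.setLIntegral_univ, MeasureTheory.lintegral_count, tsum_fintype]
  exact ENNReal.sum_lt_top.mpr fun i _ => ENNReal.ofReal_lt_top

/-- The law of `n` i.i.d. samples from `p`. -/
noncomputable def iidMeasure {d : ℕ} (p : Fin d → ℝ) (n : ℕ) :
    Measure (Fin n → Fin d) :=
  Measure.pi fun _ => discMeasure p

/-- The empirical distribution of the sample `x`. -/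
noncomputable def empDist {d n : ℕ} (x : Fin n → Fin d) : Fin d → ℝ :=
  fun i => ((Finset.univ.filter fun j => x j = i).card : ℝ) / n

/-- ℓ¹ distance between two vectors on `Fin d`. -/
noncomputable def l1Dist {d : ℕ} (p q : Fin d → ℝ) : ℝ :=
  ∑ i, |p i - q i|


lemma log_le_div_e {u : ℝ} (hu : 0 < u) : Real.log u ≤ u / Real.exp 1 := by
  have h := Real.log_le_sub_one_of_pos (show 0 < u / Real.exp 1 from div_pos hu (Real.exp_pos 1))
  rw [Real.log_div hu.ne' (Real.exp_pos 1).ne', Real.log_exp] at h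
  linarith

lemma neg_mul_log_le_sqrt {T : ℝ} (hT : 0 ≤ T) : -(T * Real.log T) ≤ Real.sqrt T := by
  rcases eq_or_lt_of_le hT with h | h
  · simp [← h]
  have hs : 0 < Real.sqrt T := Real.sqrt_pos.2 h
  have h1 : Real.log (Real.sqrt T)⁻¹ ≤ (Real.sqrt T)⁻¹ / Real.exp 1 :=
    log_le_div_e (inv_pos.2 hs)
  have h2 : Real.log (Real.sqrt T)⁻¹ = - (Real.log T / 2) := by
    rw [Real.log_inv, Real.log_sqrt hT]
  have he : (2:ℝ) ≤ Real.exp 1 := by have := Real.add_one_le_exp 1; linarith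
  have hTs : Real.sqrt T * Real.sqrt T = T := Real.mul_self_sqrt hT
  have hinv : T * (Real.sqrt T)⁻¹ = Real.sqrt T := by
    rw [← div_eq_mul_inv, Real.div_sqrt]
  -- -(T log T) = 2 T * log (√T)⁻¹ ≤ 2 T (√T)⁻¹ / e = 2 √T / e ≤ √T
  have step : -(T * Real.log T) ≤ 2 * Real.sqrt T / Real.exp 1 := by
    have := mul_le_mul_of_nonneg_left h1 (by positivity : (0:ℝ) ≤ 2 * T)
    calc -(T * Real.log T) = 2 * T * Real.log (Real.sqrt T)⁻¹ := by rw [h2]; ring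
    _ ≤ 2 * T * ((Real.sqrt T)⁻¹ / Real.exp 1) := this
    _ = 2 * (T * (Real.sqrt T)⁻¹) / Real.exp 1 := by ring
    _ = 2 * Real.sqrt T / Real.exp 1 := by rw [hinv]
  have : 2 * Real.sqrt T / Real.exp 1 ≤ Real.sqrt T := by
    rw [div_le_iff₀ (Real.exp_pos 1)]
    nlinarith
  linarith

lemma entropy_term (x y : ℝ) (hx0 : 0 ≤ x) (hx1 : x ≤ 1) (hy0 : 0 ≤ y) (hy1 : y ≤ 1) :
    x * Real.log x - y * Real.log y ≤ |x - y| - |x - y| * Real.log |x - y| := by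
  rcases le_total y x with h | h
  · rw [abs_of_nonneg (by linarith)]
    have ht0 : 0 ≤ x - y := by linarith
    have hlogt : Real.log (x - y) ≤ 0 := Real.log_nonpos ht0 (by linarith)
    have key : x * Real.log x - y * Real.log y ≤ x - y := by
      rcases eq_or_lt_of_le hy0 with hy | hy
      · have h1 : x * Real.log x ≤ 0 :=
          mul_nonpos_of_nonneg_of_nonpos hx0 (Real.log_nonpos hx0 hx1)
        rw [← hy]; simpa using by linarith
      · have hx : 0 < x := lt_of_lt_of_le hy h
        have h1 : Real.log x ≤ 0 := Real.log_nonpos hx.le hx1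
        have h2 : Real.log x - Real.log y ≤ x / y - 1 := by
          have h3 := Real.log_le_sub_one_of_pos (show 0 < x / y from div_pos hx hy)
          rwa [Real.log_div hx.ne' hy.ne'] at h3
        have h4 : y * (Real.log x - Real.log y) ≤ y * (x / y - 1) :=
          mul_le_mul_of_nonneg_left h2 hy0
        have h5 : y * (x / y - 1) = x - y := by field_simp
        nlinarith [mul_nonpos_of_nonneg_of_nonpos ht0 h1]
    nlinarith [mul_nonpos_of_nonneg_of_nonpos ht0 hlogt]
  · rw [abs_of_nonpos (by linarith), neg_sub]
    have ht0 : 0 ≤ y - x := by linarith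
    have key : x * Real.log x + (y - x) * Real.log (y - x) ≤ y * Real.log y := by
      rcases eq_or_lt_of_le hx0 with hx | hx
      · rw [← hx]; simp
      · have hy : 0 < y := lt_of_lt_of_le hx h
        have h1 : Real.log x ≤ Real.log y := Real.log_le_log hx h
        rcases eq_or_lt_of_le ht0 with ht | ht
        · have hxy : x = y := by linarith
          rw [← ht, hxy]; simp
        · have h2 : Real.log (y - x) ≤ Real.log y := Real.log_le_log ht (by linarith)
          nlinarith [mul_le_mul_of_nonneg_left h1 hx0, mul_le_mul_of_nonneg_left h2 ht0]
    nlinarith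

lemma jensen_log {ι : Type*} (S : Finset ι) (hS : S.Nonempty) (t : ι → ℝ)
    (hpos : ∀ i ∈ S, 0 < t i) (T : ℝ) (hT : T = ∑ i ∈ S, t i) :
    ∑ i ∈ S, t i * Real.log (t i)⁻¹ ≤ T * Real.log (S.card / T) := by
  have hT0 : 0 < T := hT ▸ Finset.sum_pos hpos hS
  have h1 := (strictConcaveOn_log_Ioi.concaveOn).le_map_sum
    (t := S) (w := fun i => t i / T) (p := fun i => (t i)⁻¹)
    (fun i hi => div_nonneg (hpos i hi).le hT0.le)
    (by rw [← Finset.sum_div, ← hT, div_self hT0.ne'])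
    (fun i hi => Set.mem_Ioi.2 (inv_pos.2 (hpos i hi)))
  have h2 : ∑ i ∈ S, (t i / T) • (t i)⁻¹ = (S.card : ℝ) / T := by
    rw [Finset.sum_congr rfl (g := fun i => 1 / T) (fun i hi => by
      rw [smul_eq_mul, div_mul_eq_mul_div, mul_inv_cancel₀ (hpos i hi).ne', one_div])]
    rw [Finset.sum_const, nsmul_eq_mul]; ring
  rw [h2] at h1
  have h3 := mul_le_mul_of_nonneg_left h1 hT0.le
  calc ∑ i ∈ S, t i * Real.log (t i)⁻¹
      = T * ∑ i ∈ S, (t i / T) • Real.log (t i)⁻¹ := by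
        rw [Finset.mul_sum]
        refine Finset.sum_congr rfl fun i hi => ?_
        rw [smul_eq_mul, ← mul_assoc, mul_div_assoc', mul_comm T (t i), mul_div_assoc, div_self hT0.ne', mul_one]
    _ ≤ T * Real.log (S.card / T) := h3

lemma main_ln {d : ℕ} (P Q F : Fin d → ℝ) (η : ℝ)
    (hP : IsProbDist P) (hQ : IsProbDist Q) (hF : IsProbDist F)
    (hFQ : ∀ i, Q i = 0 → F i = 0) (hPQ : ∀ i, Q i = 0 → P i = 0)
    (hl1 : ∑ i, |F i - P i| ≤ η) :
    (∑ i, (P i * Real.log (P i) - P i * Real.log (Q i))) -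
      (∑ i, (F i * Real.log (F i) - F i * Real.log (Q i))) ≤
      2 * Real.log (1 / minPos Q) * η + 2 * Real.sqrt 2 * Real.sqrt η := by
  obtain ⟨hP0, hP1⟩ := hP
  obtain ⟨hQ0, hQ1⟩ := hQ
  obtain ⟨hF0, hF1⟩ := hF
  have hPle1 : ∀ i, P i ≤ 1 := fun i => by
    rw [← hP1]; exact Finset.single_le_sum (fun j _ => hP0 j) (mem_univ i)
  have hQle1 : ∀ i, Q i ≤ 1 := fun i => by
    rw [← hQ1]; exact Finset.single_le_sum (fun j _ => hQ0 j) (mem_univ i)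
  have hFle1 : ∀ i, F i ≤ 1 := fun i => by
    rw [← hF1]; exact Finset.single_le_sum (fun j _ => hF0 j) (mem_univ i)
  have hne : (Finset.univ.filter fun i => 0 < Q i).Nonempty := by
    by_contra hc
    rw [Finset.not_nonempty_iff_eq_empty, Finset.filter_eq_empty_iff] at hc
    have : ∑ i, Q i = 0 :=
      Finset.sum_eq_zero fun i hi => le_antisymm (not_lt.1 (hc hi)) (hQ0 i)
    rw [hQ1] at this; norm_num at this
  set q := minPos Q with hq
  have hqdef : q = (Finset.univ.filter fun i => 0 < Q i).inf' hne Q := by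
    rw [hq, minPos, dif_pos hne]
  have hq0 : 0 < q := by
    rw [hqdef]; exact (Finset.lt_inf'_iff hne).2 fun i hi => (Finset.mem_filter.1 hi).2
  have hqle : ∀ i, 0 < Q i → q ≤ Q i := fun i hi =>
    hqdef ▸ Finset.inf'_le Q (Finset.mem_filter.2 ⟨mem_univ i, hi⟩)
  set Lq := Real.log (1 / q) with hLq
  have hLq0 : 0 ≤ Lq := by
    apply Real.log_nonneg
    rw [le_div_iff₀ hq0, one_mul]
    obtain ⟨i, hi⟩ := hne
    exact le_trans (hqle i (Finset.mem_filter.1 hi).2) (hQle1 i)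
  set t : Fin d → ℝ := fun i => |F i - P i| with ht
  set T := ∑ i, t i with hT
  have hT0 : 0 ≤ T := Finset.sum_nonneg fun i _ => abs_nonneg _
  have hTη : T ≤ η := hl1
  have hη0 : 0 ≤ η := le_trans hT0 hTη
  have hT2 : T ≤ 2 := by
    have : T ≤ ∑ i, (F i + P i) := by
      apply Finset.sum_le_sum
      intro i _
      exact abs_le.mpr ⟨by have := hF0 i; have := hP0 i; linarith,
        by have := hF0 i; have := hP0 i; linarith⟩
    rw [Finset.sum_add_distrib, hF1, hP1] at this
    linarith
  -- per-term Q part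
  have stepQ : ∀ i, (F i - P i) * Real.log (Q i) ≤ t i * Lq := by
    intro i
    rcases eq_or_lt_of_le (hQ0 i) with h0 | h0
    · have hz : (F i - P i) * Real.log (Q i) = 0 := by
        rw [hFQ i h0.symm, hPQ i h0.symm]; ring
      rw [hz]
      exact mul_nonneg (abs_nonneg _) hLq0
    · have hlq : Real.log (Q i) ≤ 0 := Real.log_nonpos (hQ0 i) (hQle1 i)
      have h1 : -Real.log (Q i) ≤ Lq := by
        rw [hLq, one_div, Real.log_inv]
        have := Real.log_le_log hq0 (hqle i h0)
        linarith
      calc (F i - P i) * Real.log (Q i) ≤ |(F i - P i) * Real.log (Q i)| := le_abs_self _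
        _ = t i * |Real.log (Q i)| := by rw [abs_mul]
        _ = t i * (-Real.log (Q i)) := by rw [abs_of_nonpos hlq]
        _ ≤ t i * Lq := mul_le_mul_of_nonneg_left h1 (abs_nonneg _)
  have stepE : ∀ i, P i * Real.log (P i) - F i * Real.log (F i) ≤ t i - t i * Real.log (t i) := by
    intro i
    have h := entropy_term (P i) (F i) (hP0 i) (hPle1 i) (hF0 i) (hFle1 i)
    rwa [abs_sub_comm] at h
  have main1 : (∑ i, (P i * Real.log (P i) - P i * Real.log (Q i))) -
      (∑ i, (F i * Real.log (F i) - F i * Real.log (Q i)))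
      ≤ T + (∑ i, -(t i * Real.log (t i))) + T * Lq := by
    rw [← Finset.sum_sub_distrib]
    have : ∀ i ∈ Finset.univ,
        (P i * Real.log (P i) - P i * Real.log (Q i)) -
        (F i * Real.log (F i) - F i * Real.log (Q i))
        ≤ t i + -(t i * Real.log (t i)) + t i * Lq := by
      intro i _
      have h1 := stepQ i
      have h2 := stepE i
      nlinarith [h1, h2]
    calc ∑ i, ((P i * Real.log (P i) - P i * Real.log (Q i)) -
          (F i * Real.log (F i) - F i * Real.log (Q i)))
        ≤ ∑ i, (t i + -(t i * Real.log (t i)) + t i * Lq) := Finset.sum_le_sum this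
      _ = T + (∑ i, -(t i * Real.log (t i))) + T * Lq := by
          rw [Finset.sum_add_distrib, Finset.sum_add_distrib, ← Finset.sum_mul]
  have hE : ∑ i, -(t i * Real.log (t i)) ≤ T * Lq + Real.sqrt T := by
    rcases eq_or_lt_of_le hT0 with h | hTpos
    · have hti : ∀ i ∈ Finset.univ, t i = 0 := fun i hi =>
        (Finset.sum_eq_zero_iff_of_nonneg (fun j _ => abs_nonneg _)).1 h.symm i hi
      rw [Finset.sum_eq_zero (fun i hi => by rw [hti i hi]; simp)]
      have := Real.sqrt_nonneg T
      nlinarith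
    · set S := Finset.univ.filter (fun i => 0 < t i) with hS
      have hSne : S.Nonempty := by
        by_contra hc
        rw [Finset.not_nonempty_iff_eq_empty, Finset.filter_eq_empty_iff] at hc
        have : T = 0 := Finset.sum_eq_zero fun i hi =>
          le_antisymm (not_lt.1 (hc hi)) (abs_nonneg _)
        linarith
      have hTS : T = ∑ i ∈ S, t i := by
        rw [hT, hS]
        exact (Finset.sum_filter_of_ne fun i _ hne =>
          lt_of_le_of_ne (abs_nonneg _) (Ne.symm hne)).symm
      have hEeq : ∑ i, -(t i * Real.log (t i)) = ∑ i ∈ S, t i * Real.log (t i)⁻¹ := by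
        rw [← Finset.sum_filter_of_ne (p := fun i => 0 < t i)
          (fun i _ hne => by
            by_contra hc
            push_neg at hc
            have : t i = 0 := le_antisymm hc (abs_nonneg _)
            rw [this] at hne; simp at hne)]
        exact Finset.sum_congr rfl fun i _ => by rw [Real.log_inv]; ring
      have hJ := jensen_log S hSne t (fun i hi => (Finset.mem_filter.1 hi).2) T hTS
      have hcard : (S.card : ℝ) * q ≤ 1 := by
        have h1 : ∀ i ∈ S, q ≤ Q i := by
          intro i hi
          rcases eq_or_lt_of_le (hQ0 i) with h0 | h0
          · exfalso
            have hti : (0:ℝ) < |F i - P i| := (Finset.mem_filter.1 hi).2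
            rw [hFQ i h0.symm, hPQ i h0.symm] at hti
            simp at hti
          · exact hqle i h0
        calc (S.card : ℝ) * q = ∑ _i ∈ S, q := by rw [Finset.sum_const, nsmul_eq_mul]
          _ ≤ ∑ i ∈ S, Q i := Finset.sum_le_sum h1
          _ ≤ ∑ i, Q i := Finset.sum_le_sum_of_subset_of_nonneg
              (Finset.filter_subset _ _) (fun i _ _ => hQ0 i)
          _ = 1 := hQ1
      have hcard1 : (1:ℝ) ≤ (S.card : ℝ) := by exact_mod_cast hSne.card_pos
      have hlogcard : Real.log (S.card : ℝ) ≤ Lq := by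
        rw [hLq]
        apply Real.log_le_log (by linarith)
        rw [le_div_iff₀ hq0]
        exact hcard
      have hsplit : T * Real.log ((S.card : ℝ) / T) =
          T * Real.log (S.card : ℝ) - T * Real.log T := by
        rw [Real.log_div (by linarith) hTpos.ne']; ring
      calc ∑ i, -(t i * Real.log (t i)) = ∑ i ∈ S, t i * Real.log (t i)⁻¹ := hEeq
        _ ≤ T * Real.log ((S.card : ℝ) / T) := hJ
        _ = T * Real.log (S.card : ℝ) - T * Real.log T := hsplit
        _ ≤ T * Lq + Real.sqrt T := by
            have h2 := neg_mul_log_le_sqrt hT0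
            have h3 : T * Real.log (S.card : ℝ) ≤ T * Lq :=
              mul_le_mul_of_nonneg_left hlogcard hT0
            linarith
  -- final numeric assembly
  have hsT : Real.sqrt T ≤ Real.sqrt η := Real.sqrt_le_sqrt hTη
  have hsT0 : 0 ≤ Real.sqrt T := Real.sqrt_nonneg T
  have hsη0 : 0 ≤ Real.sqrt η := Real.sqrt_nonneg η
  have hTs2 : T ≤ Real.sqrt 2 * Real.sqrt T := by
    have hm : Real.sqrt T * Real.sqrt T = T := Real.mul_self_sqrt hT0
    have h4 : Real.sqrt T ≤ Real.sqrt 2 := Real.sqrt_le_sqrt hT2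
    nlinarith
  have h1s : (1:ℝ) ≤ Real.sqrt 2 := by
    rw [show (1:ℝ) = Real.sqrt 1 from (Real.sqrt_one).symm]
    exact Real.sqrt_le_sqrt one_le_two
  have h2Lq : 2 * Lq * T ≤ 2 * Lq * η :=
    mul_le_mul_of_nonneg_left hTη (by positivity)
  have hs2 : (0:ℝ) ≤ Real.sqrt 2 := Real.sqrt_nonneg 2
  have hfin : T + Real.sqrt T ≤ 2 * Real.sqrt 2 * Real.sqrt η := by
    nlinarith [mul_le_mul_of_nonneg_left hsT hs2]
  linarith [main1, hE]

lemma klDivReal_eq_ln {d : ℕ} (p q : Fin d → ℝ)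
    (h : ∀ i, q i = 0 → p i = 0) :
    klDivReal p q = (∑ i, (p i * Real.log (p i) - p i * Real.log (q i))) / Real.log 2 := by
  rw [klDivReal, Finset.sum_div]
  refine Finset.sum_congr rfl fun i _ => ?_
  by_cases hpi : p i = 0
  · rw [if_pos hpi, hpi]; simp
  · rw [if_neg hpi]
    have hqi : q i ≠ 0 := fun hq => hpi (h i hq)
    rw [show Real.logb 2 (p i / q i) = Real.log (p i / q i) / Real.log 2 from
      Real.log_div_log.symm, Real.log_div hpi hqi]
    ring

/-- distributions close to `P` have nearly the same divergence to `Q`. -/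
theorem klDiv_lower_semicontinuity_step {d : ℕ} (P Q F : Fin d → ℝ) (η : ℝ)
    (hP : IsProbDist P) (hQ : IsProbDist Q) (hF : IsProbDist F)
    (hFQ : ∀ i, Q i = 0 → F i = 0) (hPQ : ∀ i, Q i = 0 → P i = 0)
    (hl1 : l1Dist F P ≤ η) :
    klDivReal F Q ≥ klDivReal P Q -
      (2 * Real.logb 2 (1 / minPos Q) * η + (2 * Real.sqrt 2 / Real.log 2) * Real.sqrt η) := by
  have hlog2 : (0:ℝ) < Real.log 2 := Real.log_pos (by norm_num)
  have key := main_ln P Q F η hP hQ hF hFQ hPQ hl1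
  rw [ge_iff_le, klDivReal_eq_ln P Q hPQ, klDivReal_eq_ln F Q hFQ,
    show Real.logb 2 (1 / minPos Q) = Real.log (1 / minPos Q) / Real.log 2 from
      Real.log_div_log.symm]
  set A := ∑ i, (P i * Real.log (P i) - P i * Real.log (Q i)) with hA
  set B := ∑ i, (F i * Real.log (F i) - F i * Real.log (Q i)) with hB
  have h3 : (A - B) / Real.log 2 ≤
      (2 * Real.log (1 / minPos Q) * η + 2 * Real.sqrt 2 * Real.sqrt η) / Real.log 2 := by
    gcongr
  rw [sub_div] at h3
  have e : (2 * Real.log (1 / minPos Q) * η + 2 * Real.sqrt 2 * Real.sqrt η) / Real.log 2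
      = 2 * (Real.log (1 / minPos Q) / Real.log 2) * η
        + 2 * Real.sqrt 2 / Real.log 2 * Real.sqrt η := by ring
  rw [e] at h3
  linarith
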